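/- Let G, H : ℝ^n → ℝ^m be continuous, let S = {x ∈ ℝ^n : G(x) ≥ 0, H(x) ≥ 0, G(x)ᵀH(x) = 0} be nonempty with 0 ∉ S, and let k = min_{x∈S} ‖x‖₀ (this minimum is attained since ‖·‖₀ takes only finitely many values), so k ≥ 1. Assume that dist(S, Q_{k−K}) > 0 for every K = 1, …, k, and set ν̄ = min_{K=1,…,k} (1/K)·dist(S, Q_{k−K}) > 0. Then for every ν with 0 < ν < ν̄: (a) Φ_ν(x) ≥ k for all x ∈ S; (b) for x ∈ S, Φ_ν(x) = k if and only if ‖x‖₀ = k. Consequently the problems min_{x∈S} ‖x‖₀ and min_{x∈S} Φ_ν(x) have the same set of global minimizers and the same optimal value k. -/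

import Mathlib

open scoped BigOperators

/-- Number of nonzero components of `x`. -/
noncomputable def nnz {n : ℕ} (x : EuclideanSpace ℝ (Fin n)) : ℕ :=
  Set.ncard {i | x i ≠ 0}

/-- Capped-ℓ1 surrogate `Φ_ν(x) = ∑ᵢ min{1, |xᵢ|/ν}`. -/
noncomputable def Phi {n : ℕ} (ν : ℝ) (x : EuclideanSpace ℝ (Fin n)) : ℝ :=
  ∑ i, min 1 (|x i| / ν)

open Classical in
lemma nnz_eq {n : ℕ} (x : EuclideanSpace ℝ (Fin n)) :
    nnz x = (Finset.univ.filter (fun i => x i ≠ 0)).card := by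
  rw [nnz, Set.ncard_eq_toFinset_card']
  congr 1
  ext i
  simp

lemma l2_le_l1 {n : ℕ} (z : EuclideanSpace ℝ (Fin n)) :
    ‖z‖ ≤ ∑ i, |z i| := by
  rw [EuclideanSpace.norm_eq]
  have h1 : ∑ i, ‖z i‖ ^ 2 ≤ (∑ i, |z i|) ^ 2 := by
    simpa [Real.norm_eq_abs] using
      Finset.sum_sq_le_sq_sum_of_nonneg (s := Finset.univ)
        (f := fun i => |z i|) (fun i _ => abs_nonneg _)
  calc Real.sqrt (∑ i, ‖z i‖ ^ 2) ≤ Real.sqrt ((∑ i, |z i|) ^ 2) := Real.sqrt_le_sqrt h1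
    _ = ∑ i, |z i| := Real.sqrt_sq (Finset.sum_nonneg fun i _ => abs_nonneg _)

theorem stmt_0 {n m : ℕ}
    (G H : EuclideanSpace ℝ (Fin n) → Fin m → ℝ)
    (hG : Continuous G) (hH : Continuous H)
    (S : Set (EuclideanSpace ℝ (Fin n)))
    (hS : S = {x | (∀ i, 0 ≤ G x i) ∧ (∀ i, 0 ≤ H x i) ∧ ∑ i, G x i * H x i = 0})
    (hSne : S.Nonempty) (h0S : (0 : EuclideanSpace ℝ (Fin n)) ∉ S)
    (k : ℕ)
    (hkmin : ∀ x ∈ S, k ≤ nnz x) (hkatt : ∃ x ∈ S, nnz x = k)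
    (Q : ℕ → Set (EuclideanSpace ℝ (Fin n)))
    (hQ : ∀ s, Q s = {x | nnz x ≤ s})
    (distSQ : ℕ → ℝ)
    (hdistSQ : ∀ s, distSQ s = sInf ((fun x => Metric.infDist x (Q s)) '' S))
    (hpos : ∀ K, 1 ≤ K → K ≤ k → 0 < distSQ (k - K))
    (νbar : ℝ)
    (hνbar : νbar = sInf ((fun K : ℕ => (1 / (K : ℝ)) * distSQ (k - K)) '' Set.Icc 1 k))
    (ν : ℝ) (hν0 : 0 < ν) (hνlt : ν < νbar) :
    (∀ x ∈ S, (k : ℝ) ≤ Phi ν x) ∧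
    (∀ x ∈ S, (Phi ν x = (k : ℝ) ↔ nnz x = k)) ∧
    (∀ x ∈ S, ((∀ y ∈ S, nnz x ≤ nnz y) ↔ (∀ y ∈ S, Phi ν x ≤ Phi ν y))) := by
  classical
  obtain ⟨x₀, hx₀S, hx₀k⟩ := hkatt
  -- k ≥ 1
  have hk1 : 1 ≤ k := by
    by_contra h
    push_neg at h
    interval_cases k
    have hx0 : x₀ = 0 := by
      have h0 : (Finset.univ.filter (fun i => x₀ i ≠ 0)).card = 0 := by
        rw [← nnz_eq, hx₀k]
      rw [Finset.card_eq_zero, Finset.filter_eq_empty_iff] at h0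
      ext i
      have := h0 (Finset.mem_univ i)
      simpa using this
    exact h0S (hx0 ▸ hx₀S)
  -- main pointwise lemma
  have key : ∀ x ∈ S, ((k : ℝ) ≤ Phi ν x) ∧ (Phi ν x = (k : ℝ) ↔ nnz x = k) := by
    intro x hx
    set A := Finset.univ.filter (fun i => ν ≤ |x i|) with hAdef
    set B := Finset.univ.filter (fun i => ¬ ν ≤ |x i|) with hBdef
    have hsplit : Phi ν x = ∑ i ∈ A, min 1 (|x i| / ν) + ∑ i ∈ B, min 1 (|x i| / ν) :=
      (Finset.sum_filter_add_sum_filter_not Finset.univ _ _).symm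
    have hA1 : ∑ i ∈ A, min 1 (|x i| / ν) = (A.card : ℝ) := by
      rw [Finset.sum_congr rfl (fun i hi => ?_), Finset.sum_const, nsmul_eq_mul, mul_one]
      exact min_eq_left ((one_le_div hν0).mpr (Finset.mem_filter.mp hi).2)
    have hB1 : ∑ i ∈ B, min 1 (|x i| / ν) = (∑ i ∈ B, |x i|) / ν := by
      rw [Finset.sum_div]
      refine Finset.sum_congr rfl fun i hi => ?_
      have h := (Finset.mem_filter.mp hi).2
      exact min_eq_right ((div_le_one hν0).mpr (lt_of_not_ge h).le)
    have hPhi : Phi ν x = (A.card : ℝ) + (∑ i ∈ B, |x i|) / ν := by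
      rw [hsplit, hA1, hB1]
    have hBnn : 0 ≤ ∑ i ∈ B, |x i| := Finset.sum_nonneg fun i _ => abs_nonneg _
    -- strict case
    have hstrict : A.card < k → (k : ℝ) < Phi ν x := by
      intro hAk
      set K := k - A.card with hKdef
      have hK1 : 1 ≤ K := by omega
      have hKk : K ≤ k := by omega
      have hkK : k - K = A.card := by omega
      have hKpos : (0 : ℝ) < (K : ℝ) := by exact_mod_cast hK1
      set y : EuclideanSpace ℝ (Fin n) := WithLp.toLp 2 (fun i => if i ∈ A then x i else 0) with hydef
      have hy : y ∈ Q (k - K) := by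
        rw [hQ, Set.mem_setOf_eq, hkK, nnz_eq]
        apply Finset.card_le_card
        intro i hi
        rw [Finset.mem_filter] at hi ⊢
        refine ⟨Finset.mem_univ i, ?_⟩
        by_contra h
        have hiA : i ∉ A := by simp [hAdef, h]
        exact hi.2 (by simp [hydef, hiA])
      have hzabs : ∀ i, |(x - y) i| = if i ∈ A then 0 else |x i| := by
        intro i
        have : (x - y) i = x i - y i := rfl
        rw [this, hydef]
        by_cases h : i ∈ A <;> simp [h]
      have hdist : dist x y ≤ ∑ i ∈ B, |x i| := by
        rw [dist_eq_norm]
        refine (l2_le_l1 (x - y)).trans_eq ?_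
        rw [← Finset.sum_filter_add_sum_filter_not Finset.univ (fun i => ν ≤ |x i|)
          (fun i => |(x - y) i|)]
        have e1 : ∑ i ∈ A, |(x - y) i| = 0 := by
          apply Finset.sum_eq_zero
          intro i hi
          rw [hzabs i, if_pos (by exact hi)]
        have e2 : ∑ i ∈ B, |(x - y) i| = ∑ i ∈ B, |x i| := by
          refine Finset.sum_congr rfl fun i hi => ?_
          rw [hzabs i, if_neg]
          intro hiA
          exact (Finset.mem_filter.mp hi).2 (Finset.mem_filter.mp hiA).2
        rw [e1, e2, zero_add]
      have h1 : Metric.infDist x (Q (k - K)) ≤ dist x y := Metric.infDist_le_dist_of_mem hy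
      have h2 : distSQ (k - K) ≤ Metric.infDist x (Q (k - K)) := by
        rw [hdistSQ]
        refine csInf_le ⟨0, ?_⟩ ⟨x, hx, rfl⟩
        rintro r ⟨z, hz, rfl⟩
        exact Metric.infDist_nonneg
      have h3 : ν < (1 / (K : ℝ)) * distSQ (k - K) := by
        refine lt_of_lt_of_le hνlt ?_
        rw [hνbar]
        refine csInf_le ⟨0, ?_⟩ ⟨K, Set.mem_Icc.mpr ⟨hK1, hKk⟩, rfl⟩
        rintro r ⟨K', hK', rfl⟩
        rw [Set.mem_Icc] at hK'
        have hd := hpos K' hK'.1 hK'.2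
        have : (0:ℝ) < (K' : ℝ) := by exact_mod_cast hK'.1
        positivity
      have h4 : (K : ℝ) * ν < ∑ i ∈ B, |x i| := by
        have : (K : ℝ) * ν < distSQ (k - K) := by
          rw [one_div] at h3
          calc (K : ℝ) * ν < (K : ℝ) * (((K:ℝ))⁻¹ * distSQ (k - K)) := by
                exact (mul_lt_mul_iff_right₀ hKpos).mpr h3
            _ = distSQ (k - K) := by field_simp
        linarith
      have h5 : (K : ℝ) < (∑ i ∈ B, |x i|) / ν := (lt_div_iff₀ hν0).mpr (by linarith)
      have hcard : (A.card : ℝ) = (k : ℝ) - (K : ℝ) := by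
        have : ((k - K : ℕ) : ℝ) = (k : ℝ) - (K : ℝ) := by
          rw [Nat.cast_sub hKk]
        rw [← this, hkK]
      rw [hPhi, hcard]
      linarith
    have hge : (k : ℝ) ≤ Phi ν x := by
      by_cases hAk : A.card < k
      · exact (hstrict hAk).le
      · push_neg at hAk
        rw [hPhi]
        have : (k : ℝ) ≤ (A.card : ℝ) := by exact_mod_cast hAk
        have := div_nonneg hBnn hν0.le
        linarith
    refine ⟨hge, ?_, ?_⟩
    · -- Phi = k → nnz = k
      intro hPk
      have hAk : k ≤ A.card := by
        by_contra h
        push_neg at h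
        exact absurd hPk (ne_of_gt (hstrict h))
      have hBz : (∑ i ∈ B, |x i|) = 0 ∧ A.card = k := by
        have hc : (k : ℝ) ≤ (A.card : ℝ) := by exact_mod_cast hAk
        have hq : 0 ≤ (∑ i ∈ B, |x i|) / ν := div_nonneg hBnn hν0.le
        rw [hPhi] at hPk
        have hc2 : (A.card : ℝ) = (k : ℝ) := by linarith
        constructor
        · have : (∑ i ∈ B, |x i|) / ν = 0 := by linarith
          have := (div_eq_zero_iff.mp this).resolve_right (ne_of_gt hν0)
          exact this
        · exact_mod_cast hc2
      have hxB : ∀ i ∈ B, x i = 0 := by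
        intro i hi
        have := (Finset.sum_eq_zero_iff_of_nonneg (fun j _ => abs_nonneg (x j))).mp hBz.1 i hi
        exact abs_eq_zero.mp this
      rw [nnz_eq]
      rw [← hBz.2]
      congr 1
      ext i
      simp only [Finset.mem_filter, Finset.mem_univ, true_and, hAdef]
      constructor
      · intro h
        by_contra hle
        exact h (hxB i (Finset.mem_filter.mpr ⟨Finset.mem_univ i, hle⟩))
      · intro h
        have : 0 < |x i| := lt_of_lt_of_le hν0 h
        exact abs_pos.mp this
    · -- nnz = k → Phi = k
      intro hnk
      have hle : Phi ν x ≤ (k : ℝ) := by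
        rw [Phi]
        calc ∑ i, min 1 (|x i| / ν) ≤ ∑ i, (if x i ≠ 0 then (1:ℝ) else 0) := by
              refine Finset.sum_le_sum fun i _ => ?_
              by_cases h : x i = 0
              · simp [h, hν0.le]
              · simp [h]
          _ = ((Finset.univ.filter (fun i => x i ≠ 0)).card : ℝ) := by
              rw [Finset.sum_boole]
          _ = (k : ℝ) := by rw [← nnz_eq, hnk]
      linarith
  refine ⟨fun x hx => (key x hx).1, fun x hx => (key x hx).2, ?_⟩
  intro x hx
  have hPx₀ : Phi ν x₀ = (k : ℝ) := (key x₀ hx₀S).2.mpr hx₀k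
  constructor
  · intro hmin y hy
    have hxk : nnz x = k := le_antisymm (hx₀k ▸ hmin x₀ hx₀S) (hkmin x hx)
    have : Phi ν x = (k : ℝ) := (key x hx).2.mpr hxk
    rw [this]
    exact (key y hy).1
  · intro hmin y hy
    have hPx : Phi ν x = (k : ℝ) := le_antisymm (hPx₀ ▸ hmin x₀ hx₀S) (key x hx).1
    have hxk : nnz x = k := (key x hx).2.mp hPx
    rw [hxk]
    exact hkmin y hy
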